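/- Let q ∈ (1, ∞), let μ be a probability measure on Ω, and let f₁, f₂ be measurable with ‖f_i‖_q^q ≤ 1/2, ‖f_i‖_∞ ≤ M_q for i = 1,2, and ‖f₁ − f₂‖_∞ ≤ δ. For z = (x¹, …, x^m) ∈ Ω^m with x^j i.i.d. ∼ μ, define L_z^q(f) = (1/m)Σ_{j=1}^m |f(x^j)|^q − ‖f‖_q^q. Then μ^m{z : |L_z^q(f₁) − L_z^q(f₂)| ≥ η} < 2·exp(−m·η²/(16·q·M_q^{q−1}·δ)) for every η ∈ (0,1). -/

import Mathlib

open MeasureTheory Real ProbabilityTheory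

open MeasureTheory Real

lemma rpow_lip {q C : ℝ} (hq : 1 ≤ q) {x y : ℝ}
    (hx : x ∈ Set.Icc 0 C) (hy : y ∈ Set.Icc 0 C) :
    |x ^ q - y ^ q| ≤ q * C ^ (q - 1) * |x - y| := by
  have hC : (0:ℝ) ≤ C := le_trans hx.1 hx.2
  have H := Convex.norm_image_sub_le_of_norm_hasDerivWithin_le
    (f := fun z : ℝ => z ^ q) (f' := fun z : ℝ => q * z ^ (q - 1)) (s := Set.Icc 0 C)
    (C := q * C ^ (q - 1))
    (fun z _ => (Real.hasDerivAt_rpow_const (Or.inr hq)).hasDerivWithinAt)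
    (fun z hz => by
      show ‖q * z ^ (q - 1)‖ ≤ q * C ^ (q - 1)
      rw [Real.norm_eq_abs,
        abs_of_nonneg (mul_nonneg (by linarith) (Real.rpow_nonneg hz.1 _))]
      exact mul_le_mul_of_nonneg_left
        (Real.rpow_le_rpow hz.1 hz.2 (by linarith)) (by linarith))
    (convex_Icc _ _) hy hx
  simpa [Real.norm_eq_abs] using H


lemma one_sided {Ω : Type*} [MeasurableSpace Ω] (μ : Measure Ω) [IsProbabilityMeasure μ]
    (g : Ω → ℝ) (hg : Measurable g) (M : ℝ) (hM : 0 < M)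
    (hb : ∀ x, |g x| ≤ M) (hmean : ∫ x, g x ∂μ = 0) (hL1 : ∫ x, |g x| ∂μ ≤ 2)
    (m : ℕ) (η : ℝ) (hη0 : 0 < η) (hη1 : η < 1) :
    ((Measure.pi fun _ : Fin m => μ) {z | (m : ℝ) * η ≤ ∑ j, g (z j)}).toReal ≤
      Real.exp ((m : ℝ) * (-(13/72) * η ^ 2 / M)) := by
  letI : MeasureSpace Ω := ⟨μ⟩
  set t : ℝ := η / (4 * M) with htdef
  have ht : 0 < t := by positivity
  have htM : t * M = η / 4 := by rw [htdef]; field_simp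
  -- pointwise exponential bound
  have key : ∀ x, exp (t * g x) ≤ 1 + t * g x + (5/9) * (t * g x) ^ 2 := by
    intro x
    set y := t * g x with hy
    have hyb : |y| ≤ 1/4 := by
      rw [hy, abs_mul, abs_of_pos ht]
      calc t * |g x| ≤ t * M := mul_le_mul_of_nonneg_left (hb x) ht.le
        _ = η / 4 := htM
        _ ≤ 1/4 := by linarith
    have h1 : |y| ≤ 1 := by linarith [abs_nonneg y]
    have h2 := Real.exp_bound h1 (n := 3) (by norm_num)
    have h3 : ∑ i ∈ Finset.range 3, y ^ i / (Nat.factorial i) = 1 + y + y ^ 2 / 2 := by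
      norm_num [Finset.sum_range_succ, Nat.factorial]
    rw [h3] at h2
    have h4 : |y| ^ 3 ≤ (1/4) * y ^ 2 := by
      nlinarith [abs_nonneg y, sq_abs y]
    have h5 := (abs_sub_le_iff.mp h2).1
    have h6 : ((3:ℕ).succ : ℝ) / ((Nat.factorial 3 : ℕ) * (3:ℕ)) = 2/9 := by norm_num [Nat.factorial]
    rw [h6] at h5
    nlinarith [sq_abs y]
  -- integrability
  have hint_g : Integrable g μ :=
    (integrable_const M).mono' hg.aestronglyMeasurable
      (Filter.Eventually.of_forall fun x => by simpa using hb x)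
  have hint_gsq : Integrable (fun x => (g x) ^ 2) μ :=
    (integrable_const (M ^ 2)).mono' ((hg.pow_const 2).aestronglyMeasurable)
      (Filter.Eventually.of_forall fun x => by
        have := hb x
        rw [Real.norm_eq_abs, abs_of_nonneg (sq_nonneg _)]
        nlinarith [abs_nonneg (g x), sq_abs (g x)])
  have hint_exp : Integrable (fun x => exp (t * g x)) μ :=
    (integrable_const (exp (t * M))).mono'
      ((measurable_exp.comp (measurable_const.mul hg)).aestronglyMeasurable)
      (Filter.Eventually.of_forall fun x => by
        rw [Real.norm_eq_abs, abs_of_pos (exp_pos _)]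
        apply exp_le_exp.mpr
        have := (abs_le.mp (hb x)).2
        nlinarith)
  -- second moment bound
  have hgsq : ∫ x, (g x) ^ 2 ∂μ ≤ 2 * M := by
    calc ∫ x, (g x) ^ 2 ∂μ ≤ ∫ x, M * |g x| ∂μ := by
          apply integral_mono hint_gsq (hint_g.abs.const_mul M)
          intro x
          show (g x) ^ 2 ≤ M * |g x|
          nlinarith [hb x, abs_nonneg (g x), sq_abs (g x)]
      _ = M * ∫ x, |g x| ∂μ := integral_const_mul M _
      _ ≤ M * 2 := mul_le_mul_of_nonneg_left hL1 hM.le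
      _ = 2 * M := by ring
  -- mgf bound per coordinate
  have hA : ∫ x, exp (t * g x) ∂μ ≤ exp ((10/9) * t ^ 2 * M) := by
    have step1 : ∫ x, exp (t * g x) ∂μ ≤ ∫ x, (1 + t * g x + (5/9) * (t * g x) ^ 2) ∂μ := by
      apply integral_mono hint_exp _ key
      have : (fun x => 1 + t * g x + (5/9) * (t * g x) ^ 2)
          = fun x => (1 + t * g x) + ((5/9) * t ^ 2) * (g x) ^ 2 := by
        funext x; ring
      rw [this]
      exact ((integrable_const 1).add (hint_g.const_mul t)).add (hint_gsq.const_mul _)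
    have hI1 : Integrable (fun x => 1 + t * g x) μ :=
      (integrable_const 1).add (hint_g.const_mul t)
    have hI2 : Integrable (fun x => (5/9) * t ^ 2 * (g x) ^ 2) μ :=
      hint_gsq.const_mul _
    have step2 : ∫ x, (1 + t * g x + (5/9) * (t * g x) ^ 2) ∂μ
        = 1 + (5/9) * t ^ 2 * ∫ x, (g x) ^ 2 ∂μ := by
      have heq : (fun x => 1 + t * g x + (5/9) * (t * g x) ^ 2)
          = fun x => (1 + t * g x) + (5/9) * t ^ 2 * (g x) ^ 2 := by
        funext x; ring
      rw [heq, integral_add hI1 hI2, integral_add (integrable_const 1) (hint_g.const_mul t),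
        integral_const, integral_const_mul, integral_const_mul, hmean]
      simp
    have step3 : 1 + (5/9) * t ^ 2 * ∫ x, (g x) ^ 2 ∂μ ≤ 1 + (10/9) * t ^ 2 * M := by
      nlinarith [sq_nonneg t]
    rw [step2] at step1
    calc ∫ x, exp (t * g x) ∂μ ≤ 1 + (10/9) * t ^ 2 * M := le_trans step1 step3
      _ ≤ exp ((10/9) * t ^ 2 * M) := by
          linarith [Real.add_one_le_exp ((10/9) * t ^ 2 * M)]
  -- the sum and Chernoff
  set S : (Fin m → Ω) → ℝ := fun z => ∑ j, g (z j) with hS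
  have hSmeas : Measurable S := Finset.measurable_sum _ fun j _ => hg.comp (measurable_pi_apply j)
  have hint_expS : Integrable (fun z => exp (t * S z)) (Measure.pi fun _ : Fin m => μ) :=
    (integrable_const (exp (t * (m * M)))).mono'
      ((measurable_exp.comp (measurable_const.mul hSmeas)).aestronglyMeasurable)
      (Filter.Eventually.of_forall fun z => by
        rw [Real.norm_eq_abs, abs_of_pos (exp_pos _)]
        apply exp_le_exp.mpr
        apply mul_le_mul_of_nonneg_left _ ht.le
        calc S z ≤ ∑ j : Fin m, M := Finset.sum_le_sum fun j _ => (abs_le.mp (hb _)).2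
          _ = m * M := by simp [mul_comm]
        )
  have hmgf : ∫ z, exp (t * S z) ∂(Measure.pi fun _ : Fin m => μ)
      = (∫ x, exp (t * g x) ∂μ) ^ m := by
    have h1 : (fun z : Fin m → Ω => exp (t * S z))
        = fun z => ∏ j : Fin m, exp (t * g (z j)) := by
      funext z
      rw [hS, Finset.mul_sum, Real.exp_sum]
    rw [h1]
    have h2 := MeasureTheory.integral_fintype_prod_eq_pow (𝕜 := ℝ) (ι := Fin m) (μ := μ)
      (fun x => exp (t * g x))
    simpa [MeasureTheory.volume_pi, Fintype.card_fin] using h2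
  have chernoff := measure_ge_le_exp_mul_mgf (μ := Measure.pi fun _ : Fin m => μ)
    (X := S) (t := t) ((m : ℝ) * η) ht.le hint_expS
  have hmgf_le : mgf S (Measure.pi fun _ : Fin m => μ) t ≤ exp ((10/9) * t ^ 2 * M) ^ m := by
    rw [mgf, hmgf]
    exact pow_le_pow_left₀ (integral_nonneg fun x => (exp_pos _).le) hA m
  calc ((Measure.pi fun _ : Fin m => μ) {z | (m : ℝ) * η ≤ S z}).toReal
      ≤ exp (-t * ((m : ℝ) * η)) * mgf S (Measure.pi fun _ : Fin m => μ) t := chernoff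
    _ ≤ exp (-t * ((m : ℝ) * η)) * exp ((10/9) * t ^ 2 * M) ^ m :=
        mul_le_mul_of_nonneg_left hmgf_le (exp_pos _).le
    _ = exp ((m : ℝ) * (-(13/72) * η ^ 2 / M)) := by
        rw [← Real.exp_nat_mul, ← Real.exp_add]
        congr 1
        rw [htdef]
        field_simp
        ring

theorem chaining_step_concentration
    {Ω : Type*} [MeasurableSpace Ω] (μ : Measure Ω) [IsProbabilityMeasure μ]
    (q : ℝ) (hq : 1 < q)
    (f₁ f₂ : Ω → ℝ) (hm₁ : Measurable f₁) (hm₂ : Measurable f₂)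
    (Mq δ : ℝ) (hMq : 0 < Mq) (hδ : 0 < δ)
    (hq₁ : ∫ x, |f₁ x| ^ q ∂μ ≤ 1/2) (hq₂ : ∫ x, |f₂ x| ^ q ∂μ ≤ 1/2)
    (hb₁ : ∀ x, |f₁ x| ≤ Mq) (hb₂ : ∀ x, |f₂ x| ≤ Mq)
    (hdiff : ∀ x, |f₁ x - f₂ x| ≤ δ)
    (m : ℕ) (hm : 0 < m)
    (L : (Ω → ℝ) → (Fin m → Ω) → ℝ)
    (hL : ∀ f z, L f z = (1 / m) * ∑ j, |f (z j)| ^ q - ∫ x, |f x| ^ q ∂μ)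
    (η : ℝ) (hη : η ∈ Set.Ioo (0 : ℝ) 1) :
    (Measure.pi fun _ : Fin m => μ) {z | η ≤ |L f₁ z - L f₂ z|} <
      ENNReal.ofReal (2 * Real.exp (-(m * η ^ 2) / (16 * q * Mq ^ (q - 1) * δ))) := by
  obtain ⟨hη0, hη1⟩ := hη
  set M' : ℝ := q * Mq ^ (q - 1) * δ with hM'def
  have hMqq : (0:ℝ) < Mq ^ (q - 1) := Real.rpow_pos_of_pos hMq (q - 1)
  have hM' : 0 < M' := by rw [hM'def]; positivity
  set h : Ω → ℝ := fun x => |f₁ x| ^ q - |f₂ x| ^ q with hhdef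
  have hhb : ∀ x, |h x| ≤ M' := by
    intro x
    calc |h x| ≤ q * Mq ^ (q - 1) * |(|f₁ x|) - (|f₂ x|)| :=
          rpow_lip hq.le ⟨abs_nonneg _, hb₁ x⟩ ⟨abs_nonneg _, hb₂ x⟩
      _ ≤ q * Mq ^ (q - 1) * δ := by
          have h1 : |(|f₁ x|) - (|f₂ x|)| ≤ |f₁ x - f₂ x| := abs_abs_sub_abs_le_abs_sub _ _
          have h2 := hdiff x
          nlinarith
  have hhabs : ∀ x, |h x| ≤ |f₁ x| ^ q + |f₂ x| ^ q := by
    intro x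
    have h1 : (0:ℝ) ≤ |f₁ x| ^ q := Real.rpow_nonneg (abs_nonneg _) _
    have h2 : (0:ℝ) ≤ |f₂ x| ^ q := Real.rpow_nonneg (abs_nonneg _) _
    have hx : h x = |f₁ x| ^ q - |f₂ x| ^ q := rfl
    rw [hx, abs_sub_le_iff]
    constructor <;> linarith
  have hq0 : (0:ℝ) ≤ q := by linarith
  have hmes1 : Measurable fun x => |f₁ x| ^ q :=
    (Real.continuous_rpow_const hq0).measurable.comp hm₁.abs
  have hmes2 : Measurable fun x => |f₂ x| ^ q :=
    (Real.continuous_rpow_const hq0).measurable.comp hm₂.abs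
  have hmh : Measurable h := hmes1.sub hmes2
  have hint_h : Integrable h μ :=
    (integrable_const M').mono' hmh.aestronglyMeasurable
      (Filter.Eventually.of_forall fun x => by simpa using hhb x)
  have hint1 : Integrable (fun x => |f₁ x| ^ q) μ :=
    (integrable_const (Mq ^ q)).mono' hmes1.aestronglyMeasurable
      (Filter.Eventually.of_forall fun x => by
        rw [Real.norm_eq_abs, abs_of_nonneg (Real.rpow_nonneg (abs_nonneg _) _)]
        exact Real.rpow_le_rpow (abs_nonneg _) (hb₁ x) hq0)
  have hint2 : Integrable (fun x => |f₂ x| ^ q) μ :=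
    (integrable_const (Mq ^ q)).mono' hmes2.aestronglyMeasurable
      (Filter.Eventually.of_forall fun x => by
        rw [Real.norm_eq_abs, abs_of_nonneg (Real.rpow_nonneg (abs_nonneg _) _)]
        exact Real.rpow_le_rpow (abs_nonneg _) (hb₂ x) hq0)
  set c : ℝ := ∫ x, h x ∂μ with hcdef
  have hinthabs : ∫ x, |h x| ∂μ ≤ 1 := by
    calc ∫ x, |h x| ∂μ ≤ ∫ x, (|f₁ x| ^ q + |f₂ x| ^ q) ∂μ :=
          integral_mono hint_h.abs (hint1.add hint2) fun x => hhabs x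
      _ = (∫ x, |f₁ x| ^ q ∂μ) + ∫ x, |f₂ x| ^ q ∂μ := integral_add hint1 hint2
      _ ≤ 1 := by linarith
  have habsc : |c| ≤ ∫ x, |h x| ∂μ := by
    have := norm_integral_le_integral_norm (μ := μ) h
    simpa [Real.norm_eq_abs] using this
  have hc1 : |c| ≤ 1 := le_trans habsc hinthabs
  have hcM : |c| ≤ M' := by
    refine le_trans habsc ?_
    calc ∫ x, |h x| ∂μ ≤ ∫ x, M' ∂μ :=
          integral_mono hint_h.abs (integrable_const _) fun x => hhb x
      _ = M' := by simp
  set g : Ω → ℝ := fun x => h x - c with hgdef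
  have hmg : Measurable g := hmh.sub measurable_const
  have hint_g : Integrable g μ := hint_h.sub (integrable_const c)
  have hgmean : ∫ x, g x ∂μ = 0 := by
    rw [hgdef, integral_sub hint_h (integrable_const c), integral_const]
    simp [hcdef]
  have hgb : ∀ x, |g x| ≤ 2 * M' := by
    intro x
    have : |g x| ≤ |h x| + |c| := by
      have := abs_add_le (h x) (-c); rw [abs_neg, ← sub_eq_add_neg] at this; exact this
    linarith [hhb x]
  have hgL1 : ∫ x, |g x| ∂μ ≤ 2 := by
    calc ∫ x, |g x| ∂μ ≤ ∫ x, (|h x| + |c|) ∂μ := by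
          apply integral_mono hint_g.abs (hint_h.abs.add (integrable_const _))
          intro x
          show |g x| ≤ |h x| + |c|
          have := abs_add_le (h x) (-c); rw [abs_neg, ← sub_eq_add_neg] at this; exact this
      _ = (∫ x, |h x| ∂μ) + |c| := by
          rw [integral_add hint_h.abs (integrable_const _), integral_const]
          simp
      _ ≤ 2 := by linarith
  -- translate the event
  have hmne : ((m : ℝ)) ≠ 0 := Nat.cast_ne_zero.mpr hm.ne'
  have hmpos : (0:ℝ) < m := by exact_mod_cast hm
  have hc' : c = (∫ x, |f₁ x| ^ q ∂μ) - ∫ x, |f₂ x| ^ q ∂μ := by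
    rw [hcdef, hhdef, integral_sub hint1 hint2]
  have hD : ∀ z : Fin m → Ω, L f₁ z - L f₂ z = (1 / m) * ∑ j, g (z j) := by
    intro z
    have hsum : ∑ j : Fin m, g (z j)
        = (∑ j : Fin m, (|f₁ (z j)| ^ q - |f₂ (z j)| ^ q)) - m * c := by
      simp only [hgdef, hhdef, Finset.sum_sub_distrib, Finset.sum_const, Finset.card_univ,
        Fintype.card_fin, nsmul_eq_mul]
    rw [hL f₁ z, hL f₂ z, hsum, hc', Finset.sum_sub_distrib]
    field_simp
    ring
  set S1 : Set (Fin m → Ω) := {z | (m : ℝ) * η ≤ ∑ j, g (z j)} with hS1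
  set S2 : Set (Fin m → Ω) := {z | (m : ℝ) * η ≤ ∑ j, -g (z j)} with hS2
  have hsub : {z : Fin m → Ω | η ≤ |L f₁ z - L f₂ z|} ⊆ S1 ∪ S2 := by
    intro z hz
    simp only [Set.mem_setOf_eq] at hz
    rw [hD z] at hz
    have habs2 : (m : ℝ) * η ≤ |∑ j, g (z j)| := by
      rw [abs_mul, abs_of_pos (by positivity : (0:ℝ) < 1 / (m:ℝ))] at hz
      calc (m:ℝ) * η ≤ m * (1 / m * |∑ j, g (z j)|) :=
            mul_le_mul_of_nonneg_left hz hmpos.le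
        _ = |∑ j, g (z j)| := by field_simp
    rcases le_abs.mp habs2 with h1 | h1
    · exact Or.inl h1
    · refine Or.inr ?_
      show (m : ℝ) * η ≤ ∑ j, -g (z j)
      rw [Finset.sum_neg_distrib]
      exact h1
  have b1 := one_sided μ g hmg (2 * M') (by linarith) hgb hgmean hgL1 m η hη0 hη1
  have b2 := one_sided μ (fun x => -g x) hmg.neg (2 * M') (by linarith)
    (fun x => by simpa using hgb x)
    (by rw [integral_neg, hgmean, neg_zero])
    (by simpa using hgL1) m η hη0 hη1
  set ν := (Measure.pi fun _ : Fin m => μ) with hν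
  have hfin : ν {z | η ≤ |L f₁ z - L f₂ z|} ≠ ⊤ := measure_ne_top _ _
  rw [ENNReal.lt_ofReal_iff_toReal_lt hfin]
  have hμle : ν {z | η ≤ |L f₁ z - L f₂ z|} ≤ ν S1 + ν S2 :=
    le_trans (measure_mono hsub) (measure_union_le _ _)
  have hle : (ν {z | η ≤ |L f₁ z - L f₂ z|}).toReal ≤ (ν S1).toReal + (ν S2).toReal := by
    calc (ν {z | η ≤ |L f₁ z - L f₂ z|}).toReal ≤ (ν S1 + ν S2).toReal :=
          ENNReal.toReal_mono (by finiteness) hμle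
      _ = (ν S1).toReal + (ν S2).toReal :=
          ENNReal.toReal_add (measure_ne_top _ _) (measure_ne_top _ _)
  have hexp : Real.exp ((m : ℝ) * (-(13/72) * η ^ 2 / (2 * M')))
      < Real.exp (-(m * η ^ 2) / (16 * q * Mq ^ (q - 1) * δ)) := by
    apply Real.exp_lt_exp.mpr
    have h16 : 16 * q * Mq ^ (q - 1) * δ = 16 * M' := by rw [hM'def]; ring
    rw [h16]
    have hx : 0 < (m:ℝ) * η ^ 2 / M' := by positivity
    have l1 : (m:ℝ) * (-(13/72) * η ^ 2 / (2 * M')) = -(13/144) * ((m:ℝ) * η ^ 2 / M') := by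
      field_simp; ring
    have l2 : -((m:ℝ) * η ^ 2) / (16 * M') = -(1/16) * ((m:ℝ) * η ^ 2 / M') := by
      field_simp
    rw [l1, l2]
    nlinarith [hx]
  calc (ν {z | η ≤ |L f₁ z - L f₂ z|}).toReal
      ≤ (ν S1).toReal + (ν S2).toReal := hle
    _ ≤ Real.exp ((m : ℝ) * (-(13/72) * η ^ 2 / (2 * M')))
        + Real.exp ((m : ℝ) * (-(13/72) * η ^ 2 / (2 * M'))) := add_le_add b1 b2
    _ = 2 * Real.exp ((m : ℝ) * (-(13/72) * η ^ 2 / (2 * M'))) := by ring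
    _ < 2 * Real.exp (-(m * η ^ 2) / (16 * q * Mq ^ (q - 1) * δ)) := by
        linarith [hexp]
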